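/- arXiv:2012.05237 — 3 statements merged into one kernel-verified Lean document; each statement's English description precedes it below -/
import Mathlib

section
/- Let T > 0, let N ≥ 1 be an integer, and let a ∈ ℝ, q ≥ 0, ε ∈ ℝ with ε ≥ q², and c ≥ 0. Then there exists a unique continuously differentiable function η : [0,T] → ℝ satisfying the open-loop Riccati equation η'(t) = 2(a + q − q/N)·η(t) + (1 − 1/N)·η(t)² + q² − ε for all t ∈ [0,T], with terminal condition η(T) = c. Moreover, this solution satisfies η(t) ≥ 0 for all t ∈ [0,T]. -/
open Set Real

def SolvesRiccati (A B C T c : ℝ) (η : ℝ → ℝ) : Prop :=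
  (∀ t ∈ Set.Icc (0 : ℝ) T,
      HasDerivWithinAt η (A * η t + B * (η t) ^ 2 + C) (Set.Icc (0 : ℝ) T) t) ∧
    η T = c

lemma riccati_unique (A B C T c : ℝ) (hT : 0 < T) (η₁ η₂ : ℝ → ℝ)
    (h₁ : SolvesRiccati A B C T c η₁) (h₂ : SolvesRiccati A B C T c η₂) :
    ∀ t ∈ Icc (0:ℝ) T, η₁ t = η₂ t := by
  have hcont₁ : ContinuousOn η₁ (Icc (0:ℝ) T) :=
    fun t ht => ((h₁.1 t ht).continuousWithinAt)
  have hcont₂ : ContinuousOn η₂ (Icc (0:ℝ) T) :=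
    fun t ht => ((h₂.1 t ht).continuousWithinAt)
  obtain ⟨R₁, hR₁⟩ := (isCompact_Icc).exists_bound_of_continuousOn hcont₁
  obtain ⟨R₂, hR₂⟩ := (isCompact_Icc).exists_bound_of_continuousOn hcont₂
  set R : ℝ := max (max R₁ R₂) 0 with hRdef
  have hR0 : 0 ≤ R := le_max_right _ _
  have hb₁ : ∀ t ∈ Icc (0:ℝ) T, |η₁ t| ≤ R := fun t ht =>
    (hR₁ t ht).trans ((le_max_left R₁ R₂).trans (le_max_left _ _))
  have hb₂ : ∀ t ∈ Icc (0:ℝ) T, |η₂ t| ≤ R := fun t ht =>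
    (hR₂ t ht).trans ((le_max_right R₁ R₂).trans (le_max_left _ _))
  set K : NNReal := Real.toNNReal (|A| + 2 * |B| * R) with hKdef
  have hK : (K : ℝ) = |A| + 2 * |B| * R := by
    rw [hKdef, Real.coe_toNNReal]
    positivity
  have hlip : ∀ t : ℝ, LipschitzOnWith K (fun x => A * x + B * x ^ 2 + C)
      (Metric.closedBall (0:ℝ) R) := by
    intro t
    apply LipschitzOnWith.of_dist_le_mul
    intro x hx y hy
    rw [Metric.mem_closedBall, Real.dist_eq, sub_zero] at hx hy
    rw [Real.dist_eq, Real.dist_eq, hK]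
    have key : A * x + B * x ^ 2 + C - (A * y + B * y ^ 2 + C)
        = (A + B * (x + y)) * (x - y) := by ring
    rw [key, abs_mul]
    have h1 : |A + B * (x + y)| ≤ |A| + 2 * |B| * R := by
      calc |A + B * (x + y)| ≤ |A| + |B * (x + y)| := abs_add_le _ _
        _ ≤ |A| + |B| * (|x| + |y|) := by
            rw [abs_mul]; gcongr; exact abs_add_le _ _
        _ ≤ |A| + 2 * |B| * R := by nlinarith [abs_nonneg B]
    exact mul_le_mul_of_nonneg_right h1 (abs_nonneg _)
  have hmem : ∀ t, t ∈ Ioc (0:ℝ) T → Icc (0:ℝ) T ∈ nhdsWithin t (Iic t) := by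
    intro t ht
    have h1 : Ioi (0:ℝ) ∩ Iic t ⊆ Icc 0 T := fun x hx =>
      ⟨le_of_lt hx.1, hx.2.trans ht.2⟩
    exact Filter.mem_of_superset
      (Filter.inter_mem (mem_nhdsWithin_of_mem_nhds (Ioi_mem_nhds ht.1))
        self_mem_nhdsWithin) h1
  have := ODE_solution_unique_of_mem_Icc_left (v := fun _ x => A * x + B * x ^ 2 + C)
    (s := fun _ => Metric.closedBall (0:ℝ) R) (K := K) (f := η₁) (g := η₂)
    (a := 0) (b := T) (fun t _ => hlip t)
    hcont₁
    (fun t ht => ((h₁.1 t ⟨ht.1.le, ht.2⟩).mono_of_mem_nhdsWithin (hmem t ht)))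
    (fun t ht => by
      rw [Metric.mem_closedBall, Real.dist_eq, sub_zero]
      exact hb₁ t ⟨ht.1.le, ht.2⟩)
    hcont₂
    (fun t ht => ((h₂.1 t ⟨ht.1.le, ht.2⟩).mono_of_mem_nhdsWithin (hmem t ht)))
    (fun t ht => by
      rw [Metric.mem_closedBall, Real.dist_eq, sub_zero]
      exact hb₂ t ⟨ht.1.le, ht.2⟩)
    (by rw [h₁.2, h₂.2])
  exact fun t ht => this ht

/-- Existence for `B > 0`, two distinct roots `m < p` with `m ≤ 0 ≤ c`. -/
lemma riccati_exists_two_roots (B p m T c : ℝ) (hB : 0 < B) (hm : m ≤ 0)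
    (hp : 0 ≤ p) (hmp : m < p) (hc : 0 ≤ c) :
    ∃ η : ℝ → ℝ, SolvesRiccati (-B * (p + m)) B (B * (p * m)) T c η ∧
      ∀ t ∈ Icc (0:ℝ) T, 0 ≤ η t := by
  set l : ℝ := B * (p - m) with hl
  have hlpos : 0 < l := by apply mul_pos hB; linarith
  set E : ℝ → ℝ := fun t => Real.exp (l * (t - T)) with hE
  set Nu : ℝ → ℝ := fun t => p * (c - m) - m * (c - p) * E t with hNu
  set De : ℝ → ℝ := fun t => (c - m) - (c - p) * E t with hDe
  have hE0 : ∀ t, 0 < E t := fun t => Real.exp_pos _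
  have hE1 : ∀ t ≤ T, E t ≤ 1 := by
    intro t ht
    apply Real.exp_le_one_iff.mpr
    apply mul_nonpos_of_nonneg_of_nonpos hlpos.le
    linarith
  have hDepos : ∀ t ≤ T, 0 < De t := by
    intro t ht
    have h1 := hE0 t
    have h2 := hE1 t ht
    rcases le_total c p with h | h
    · have : (p - m) * E t ≤ De t := by
        simp only [hDe]
        nlinarith
      nlinarith
    · simp only [hDe]; nlinarith
  have hNupos : ∀ t ≤ T, 0 ≤ Nu t := by
    intro t ht
    have h1 := hE0 t
    have h2 := hE1 t ht
    simp only [hNu]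
    rcases le_total c p with h | h
    · nlinarith [mul_nonneg (mul_nonneg (neg_nonneg.mpr hm) (sub_nonneg.mpr h))
        (sub_nonneg.mpr h2), mul_nonneg hc (sub_pos.mpr hmp).le]
    · nlinarith [mul_nonneg hp (by linarith : (0:ℝ) ≤ c - m),
        mul_nonneg (mul_nonneg (neg_nonneg.mpr hm) (sub_nonneg.mpr h)) h1.le]
  have hET : E T = 1 := by simp [hE]
  refine ⟨fun t => Nu t / De t, ⟨?_, ?_⟩, ?_⟩
  · intro t ht
    have hDet : De t ≠ 0 := (hDepos t ht.2).ne'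
    have hEd : HasDerivAt E (l * E t) t := by
      have h1 : HasDerivAt (fun s : ℝ => l * (s - T)) l t := by
        simpa using ((hasDerivAt_id t).sub_const T).const_mul l
      have := (Real.hasDerivAt_exp (l * (t - T))).comp t h1
      simpa [hE, mul_comm, Function.comp_def] using this
    have hNud : HasDerivAt Nu (-(m * (c - p) * (l * E t))) t := by
      simpa [hNu] using ((hEd.const_mul (m * (c - p))).const_sub (p * (c - m)))
    have hDed : HasDerivAt De (-((c - p) * (l * E t))) t := by
      simpa [hDe] using ((hEd.const_mul (c - p)).const_sub (c - m))
    have hd : HasDerivAt (fun t => Nu t / De t)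
        ((-(m * (c - p) * (l * E t)) * De t - Nu t * -((c - p) * (l * E t))) / De t ^ 2) t :=
      hNud.div hDed hDet
    have heq : (-(m * (c - p) * (l * E t)) * De t - Nu t * -((c - p) * (l * E t))) / De t ^ 2
        = -B * (p + m) * (Nu t / De t) + B * (Nu t / De t) ^ 2 + B * (p * m) := by
      field_simp
      simp only [hNu, hDe, hl]
      ring
    rw [heq] at hd
    exact hd.hasDerivWithinAt
  · show Nu T / De T = c
    have h1 : De T = p - m := by simp only [hDe, hET]; ring
    have h2 : Nu T = c * (p - m) := by simp only [hNu, hET]; ring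
    rw [h1, h2]
    exact mul_div_cancel_right₀ c (sub_pos.mpr hmp).ne'
  · intro t ht
    exact div_nonneg (hNupos t ht.2) (hDepos t ht.2).le

/-- Existence for `B > 0`, `A = 0`, `C = 0` (double root at 0). -/
lemma riccati_exists_double_root (B T c : ℝ) (hB : 0 < B) (hc : 0 ≤ c) :
    ∃ η : ℝ → ℝ, SolvesRiccati 0 B 0 T c η ∧ ∀ t ∈ Icc (0:ℝ) T, 0 ≤ η t := by
  set De : ℝ → ℝ := fun t => 1 + B * c * (T - t) with hDe
  have hDepos : ∀ t ≤ T, 0 < De t := by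
    intro t ht
    have : 0 ≤ B * c * (T - t) := mul_nonneg (mul_nonneg hB.le hc) (by linarith)
    simp only [hDe]; linarith
  refine ⟨fun t => c / De t, ⟨?_, ?_⟩, ?_⟩
  · intro t ht
    have hDet : De t ≠ 0 := (hDepos t ht.2).ne'
    have hDed : HasDerivAt De (-(B * c)) t := by
      have h1 : HasDerivAt (fun s : ℝ => T - s) (-1) t := by
        simpa using (hasDerivAt_id t).const_sub T
      simpa [hDe] using (h1.const_mul (B * c)).const_add 1
    have hd : HasDerivAt (fun t => c / De t)
        ((0 * De t - c * -(B * c)) / De t ^ 2) t :=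
      (hasDerivAt_const t c).div hDed hDet
    have heq : (0 * De t - c * -(B * c)) / De t ^ 2
        = 0 * (c / De t) + B * (c / De t) ^ 2 + 0 := by
      field_simp
      ring
    rw [heq] at hd
    exact hd.hasDerivWithinAt
  · show c / De T = c
    simp [hDe]
  · intro t ht
    exact div_nonneg hc (hDepos t ht.2).le

/-- Existence for `B = 0`, `A ≠ 0`, `C ≤ 0` (linear equation). -/
lemma riccati_exists_linear (A C T c : ℝ) (hA : A ≠ 0) (hC : C ≤ 0) (hc : 0 ≤ c) :
    ∃ η : ℝ → ℝ, SolvesRiccati A 0 C T c η ∧ ∀ t ∈ Icc (0:ℝ) T, 0 ≤ η t := by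
  set E : ℝ → ℝ := fun t => Real.exp (A * (t - T)) with hE
  have hE0 : ∀ t, 0 < E t := fun t => Real.exp_pos _
  have hET : E T = 1 := by simp [hE]
  refine ⟨fun t => (c + C / A) * E t - C / A, ⟨?_, ?_⟩, ?_⟩
  · intro t ht
    have hEd : HasDerivAt E (A * E t) t := by
      have h1 : HasDerivAt (fun s : ℝ => A * (s - T)) A t := by
        simpa using ((hasDerivAt_id t).sub_const T).const_mul A
      have := (Real.hasDerivAt_exp (A * (t - T))).comp t h1
      simpa [hE, mul_comm, Function.comp_def] using this
    have hd : HasDerivAt (fun t => (c + C / A) * E t - C / A)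
        ((c + C / A) * (A * E t)) t := by
      simpa using (hEd.const_mul (c + C / A)).sub_const (C / A)
    have heq : (c + C / A) * (A * E t)
        = A * ((c + C / A) * E t - C / A) + 0 * ((c + C / A) * E t - C / A) ^ 2 + C := by
      field_simp
      ring
    rw [heq] at hd
    exact hd.hasDerivWithinAt
  · show (c + C / A) * E T - C / A = c
    rw [hET]; ring
  · intro t ht
    have h1 := hE0 t
    rcases lt_or_gt_of_ne hA with hAneg | hApos
    · have hca : 0 ≤ C / A := div_nonneg_iff.mpr (Or.inr ⟨hC, hAneg.le⟩)
      have h2 : 1 ≤ E t := by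
        apply Real.one_le_exp_iff.mpr
        nlinarith [ht.2]
      nlinarith
    · have hca : C / A ≤ 0 := div_nonpos_of_nonpos_of_nonneg hC hApos.le
      have h2 : E t ≤ 1 := by
        apply Real.exp_le_one_iff.mpr
        nlinarith [ht.2]
      rcases le_total 0 (c + C / A) with h | h
      · nlinarith
      · nlinarith

/-- Existence for `A = 0`, `B = 0` (constant slope). -/
lemma riccati_exists_const (C T c : ℝ) (hC : C ≤ 0) (hc : 0 ≤ c) :
    ∃ η : ℝ → ℝ, SolvesRiccati 0 0 C T c η ∧ ∀ t ∈ Icc (0:ℝ) T, 0 ≤ η t := by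
  refine ⟨fun t => c + C * (t - T), ⟨?_, ?_⟩, ?_⟩
  · intro t ht
    have hd : HasDerivAt (fun t : ℝ => c + C * (t - T)) C t := by
      simpa using (((hasDerivAt_id t).sub_const T).const_mul C).const_add c
    have := hd.hasDerivWithinAt (s := Icc (0:ℝ) T)
    convert this using 1
    · rfl
    · rfl
    · ring
  · show c + C * (T - T) = c; ring
  · intro t ht
    simp only
    nlinarith [mul_nonneg (neg_nonneg.mpr hC) (sub_nonneg.mpr ht.2)]

/-- General existence for `B ≥ 0`, `C ≤ 0`, `c ≥ 0`. -/
lemma riccati_exists (A B C T c : ℝ) (hB : 0 ≤ B) (hC : C ≤ 0) (hc : 0 ≤ c) :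
    ∃ η : ℝ → ℝ, SolvesRiccati A B C T c η ∧ ∀ t ∈ Icc (0:ℝ) T, 0 ≤ η t := by
  rcases eq_or_lt_of_le hB with hB0 | hBpos
  · rcases eq_or_ne A 0 with hA0 | hA
    · rw [← hB0, hA0]; exact riccati_exists_const C T c hC hc
    · rw [← hB0]; exact riccati_exists_linear A C T c hA hC hc
  · set l : ℝ := Real.sqrt (A ^ 2 - 4 * B * C) with hl
    have hD : 0 ≤ A ^ 2 - 4 * B * C := by nlinarith [sq_nonneg A]
    have hl2 : l ^ 2 = A ^ 2 - 4 * B * C := Real.sq_sqrt hD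
    have hl0 : 0 ≤ l := Real.sqrt_nonneg _
    rcases eq_or_lt_of_le hl0 with hlz | hlpos
    · have hA2 : A ^ 2 - 4 * B * C = 0 := by rw [← hl2, ← hlz]; ring
      have hA0 : A = 0 := by nlinarith [sq_nonneg A]
      have hC0 : C = 0 := by nlinarith
      rw [hA0, hC0]
      exact riccati_exists_double_root B T c hBpos hc
    · set p : ℝ := (-A + l) / (2 * B) with hp
      set m : ℝ := (-A - l) / (2 * B) with hm
      have hlA : -A ≤ l ∧ A ≤ l := by
        constructor <;> nlinarith [hl2, hl0, mul_nonneg hB (neg_nonneg.mpr hC)]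
      have hp0 : 0 ≤ p := div_nonneg (by linarith [hlA.1]) (by linarith)
      have hm0 : m ≤ 0 := div_nonpos_of_nonpos_of_nonneg (by linarith [hlA.2]) (by linarith)
      have hmp : m < p := by
        rw [hp, hm]
        apply (div_lt_div_iff_of_pos_right (by linarith : (0:ℝ) < 2 * B)).mpr
        linarith
      have hA' : -B * (p + m) = A := by
        rw [hp, hm]; field_simp; ring
      have hC' : B * (p * m) = C := by
        rw [hp, hm]
        field_simp
        linear_combination (-1) * hl2
      rw [← hA', ← hC']
      exact riccati_exists_two_roots B p m T c hBpos hm0 hp0 hmp hc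

/-- Existence, uniqueness and nonnegativity of the solution of the open-loop
Riccati equation `η'(t) = 2(a + q − q/N)·η(t) + (1 − 1/N)·η(t)² + q² − ε`,
`η(T) = c`, in the Carmona–Fouque–Sun systemic-risk model, under `ε ≥ q²`. -/
theorem openLoop_riccati_existence_uniqueness_nonneg
    (T : ℝ) (hT : 0 < T) (N : ℕ) (hN : 1 ≤ N) (a q ε c : ℝ)
    (hq : 0 ≤ q) (hε : q ^ 2 ≤ ε) (hc : 0 ≤ c) :
    ∃ η : ℝ → ℝ,
      SolvesRiccati (2 * (a + q - q / (N : ℝ))) (1 - 1 / (N : ℝ)) (q ^ 2 - ε) T c η ∧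
      (∀ t ∈ Set.Icc (0 : ℝ) T, 0 ≤ η t) ∧
      (∀ η' : ℝ → ℝ,
        SolvesRiccati (2 * (a + q - q / (N : ℝ))) (1 - 1 / (N : ℝ)) (q ^ 2 - ε) T c η' →
        ∀ t ∈ Set.Icc (0 : ℝ) T, η' t = η t) := by
  have hN1 : (1 : ℝ) ≤ (N : ℝ) := by exact_mod_cast hN
  have hB : 0 ≤ 1 - 1 / (N : ℝ) := by
    have : 1 / (N : ℝ) ≤ 1 := by
      apply div_le_one_of_le₀ hN1
      linarith
    linarith
  have hC : q ^ 2 - ε ≤ 0 := by linarith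
  obtain ⟨η, hs, hnn⟩ := riccati_exists (2 * (a + q - q / (N : ℝ)))
    (1 - 1 / (N : ℝ)) (q ^ 2 - ε) T c hB hC hc
  exact ⟨η, hs, hnn, fun η' hη' t ht =>
    riccati_unique _ _ _ _ _ hT η' η hη' hs t ht⟩
end

section
/- Let T > 0 and a ∈ ℝ, q ≥ 0, ε ≥ q², c ≥ 0. For each integer N ≥ 1, let η^{OL,N} be the unique solution on [0,T] of η'(t) = 2(a + q − q/N)η(t) + (1 − 1/N)η(t)² + q² − ε with η(T) = c, and let η^{CL,N} be the unique solution of η'(t) = 2(a + q)η(t) + (1 − 1/N²)η(t)² + q² − ε with η(T) = c. Then there exists a unique solution η^∞ on [0,T] of the limiting Riccati equation η'(t) = 2(a + q)η(t) + η(t)² + q² − ε with η(T) = c, and both sup_{t ∈ [0,T]} |η^{OL,N}(t) − η^∞(t)| → 0 and sup_{t ∈ [0,T]} |η^{CL,N}(t) − η^∞(t)| → 0 as N → ∞. In particular sup_{t ∈ [0,T]} |η^{OL,N}(t) − η^{CL,N}(t)| → 0 as N → ∞. -/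
open Set Filter Real Topology

set_option maxHeartbeats 1600000

namespace RiccatiAux

lemma nhds_Ioc_eq {s T : ℝ} (h : s < T) : 𝓝[Set.Ioc s T] s = 𝓝[>] s := by
  rw [← Set.Ioi_inter_Iic, nhdsWithin_inter_of_mem']
  exact mem_nhdsWithin_of_mem_nhds (Iic_mem_nhds h)

lemma deriv_Ici {T : ℝ} {f : ℝ → ℝ} {d : ℝ} {t : ℝ} (ht : t ∈ Set.Ico (0:ℝ) T)
    (h : HasDerivWithinAt f d (Set.Icc (0:ℝ) T) t) : HasDerivWithinAt f d (Set.Ici t) t := by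
  apply h.mono_of_mem_nhdsWithin
  have h1 : Set.Iic T ∈ 𝓝[Set.Ici t] t :=
    mem_nhdsWithin_of_mem_nhds (Iic_mem_nhds ht.2)
  have h2 : Set.Ici t ∈ 𝓝[Set.Ici t] t := self_mem_nhdsWithin
  filter_upwards [h1, h2] with x hx1 hx2
  exact ⟨le_trans ht.1 hx2, hx1⟩

/-- One-sided Grönwall-type invariance: if `g 0 ≤ 0` and `g' ≤ L·g` wherever `g ≥ 0`,
then `g ≤ 0` on `[0, T]`. -/
lemma nonpos_of_deriv_le {T L : ℝ} (hT : 0 ≤ T) (hL : 0 ≤ L) {g g' : ℝ → ℝ}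
    (hg : ∀ s ∈ Set.Icc (0:ℝ) T, HasDerivWithinAt g (g' s) (Set.Icc (0:ℝ) T) s)
    (h0 : g 0 ≤ 0)
    (hbound : ∀ s ∈ Set.Ico (0:ℝ) T, 0 ≤ g s → g' s ≤ L * g s) :
    ∀ s ∈ Set.Icc (0:ℝ) T, g s ≤ 0 := by
  have hgc : ContinuousOn g (Set.Icc 0 T) := fun s hs => (hg s hs).continuousWithinAt
  set f : ℝ → ℝ := fun s => max (g s) 0 with hf
  set F' : ℝ → ℝ := fun s => if 0 < g s then g' s else 0 with hF'
  have key : ∀ s ∈ Set.Icc (0:ℝ) T, f s ≤ gronwallBound 0 L 0 (s - 0) := by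
    apply le_gronwallBound_of_liminf_deriv_right_le (f := f) (f' := F')
      (hgc.sup continuousOn_const)
    · -- liminf condition
      intro s hs r hr
      have hsT : s < T := hs.2
      have hIoc : Set.Ioc s T ⊆ Set.Icc 0 T \ {s} := by
        intro z hz
        exact ⟨⟨le_trans hs.1 hz.1.le, hz.2⟩, by simp [ne_of_gt hz.1]⟩
      have hslope : Filter.Tendsto (slope g s) (𝓝[>] s) (𝓝 (g' s)) := by
        rw [← nhds_Ioc_eq hsT]
        exact (hasDerivWithinAt_iff_tendsto_slope.1 (hg s ⟨hs.1, hs.2.le⟩)).mono_left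
          (nhdsWithin_mono _ hIoc)
      have hcont : Filter.Tendsto g (𝓝[>] s) (𝓝 (g s)) := by
        rw [← nhds_Ioc_eq hsT]
        exact ((hgc s ⟨hs.1, hs.2.le⟩).mono_left
          (nhdsWithin_mono _ (fun z hz => ⟨le_trans hs.1 hz.1.le, hz.2⟩)))
      have hmem : ∀ᶠ z in 𝓝[>] s, s < z := eventually_mem_nhdsWithin
      rcases lt_trichotomy (g s) 0 with hgs | hgs | hgs
      · -- g s < 0 : f = 0 near s, slope = 0 < r
        have hrpos : 0 < r := by simpa [hF', not_lt.2 hgs.le] using hr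
        have hev : ∀ᶠ z in 𝓝[>] s, g z < 0 := hcont (Iio_mem_nhds hgs)
        refine ((hev.and hmem).mono fun z hz => ?_).frequently
        have : f z = 0 := max_eq_right hz.1.le
        have hfs : f s = 0 := max_eq_right hgs.le
        rw [this, hfs]
        simpa using hrpos
      · -- g s = 0
        have hF's : F' s = 0 := by simp [hF', hgs]
        have hrpos : 0 < r := by rw [hF's] at hr; exact hr
        have hg's : g' s ≤ 0 := by
          have := hbound s hs (le_of_eq hgs.symm); rwa [hgs, mul_zero] at this
        have hev : ∀ᶠ z in 𝓝[>] s, slope g s z < r :=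
          hslope (Iio_mem_nhds (lt_of_le_of_lt hg's hrpos))
        refine ((hev.and hmem).mono fun z hz => ?_).frequently
        have hzs : (0:ℝ) < z - s := by linarith [hz.2]
        have hfs : f s = 0 := by simp [hf, hgs]
        have hslz : slope g s z = (z - s)⁻¹ * g z := by
          rw [slope_def_field]; rw [hgs]; ring
        have : (z - s)⁻¹ * (f z - f s) = max ((z - s)⁻¹ * g z) 0 := by
          rw [hfs, sub_zero, hf]
          exact (mul_max_of_nonneg _ _ (inv_nonneg.2 hzs.le)).trans (by simp)
        rw [this]
        exact max_lt (by rw [← hslz]; exact hz.1) hrpos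
      · -- g s > 0 : f = g near s
        have hF's : F' s = g' s := by simp [hF', hgs]
        have hev1 : ∀ᶠ z in 𝓝[>] s, slope g s z < r := by
          apply hslope (Iio_mem_nhds _); rwa [hF's] at hr
        have hev2 : ∀ᶠ z in 𝓝[>] s, 0 < g z := hcont (Ioi_mem_nhds hgs)
        refine ((hev1.and (hev2.and hmem)).mono fun z hz => ?_).frequently
        have : f z - f s = g z - g s := by
          rw [hf]; simp [max_eq_left hz.2.1.le, max_eq_left hgs.le]
        have h1 := hz.1
        rw [slope_def_field, div_eq_inv_mul] at h1
        rw [this]; exact h1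
    · exact max_le h0 le_rfl
    · intro s hs
      rcases le_or_gt (g s) 0 with h | h
      · simp [hF', not_lt.2 h, f, max_eq_right h, mul_nonneg hL, le_refl]
      · have := hbound s hs h.le
        simpa [hF', h, f, max_eq_left h.le] using this
  intro s hs
  have := key s hs
  rw [gronwallBound_ε0_δ0] at this
  exact le_trans (le_max_left _ _) this

/-- Time reversal of a Riccati solution. -/
lemma reversed_deriv {A B C T c : ℝ} {η : ℝ → ℝ} (h : SolvesRiccati A B C T c η) :
    ∀ s ∈ Set.Icc (0:ℝ) T, HasDerivWithinAt (fun s => η (T - s))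
      (-(A * η (T - s) + B * (η (T - s))^2 + C)) (Set.Icc (0:ℝ) T) s := by
  intro s hs
  have hts : T - s ∈ Set.Icc (0:ℝ) T := ⟨by linarith [hs.2], by linarith [hs.1]⟩
  have h1 : HasDerivWithinAt (fun x : ℝ => T - x) (-1) (Set.Icc (0:ℝ) T) s :=
    ((hasDerivAt_id s).const_sub T).hasDerivWithinAt
  have hmap : Set.MapsTo (fun x : ℝ => T - x) (Set.Icc (0:ℝ) T) (Set.Icc (0:ℝ) T) :=
    fun x hx => ⟨by simp at hx ⊢; linarith [hx.2], by simp at hx ⊢; linarith [hx.1]⟩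
  have := (h.1 (T - s) hts).comp s h1 hmap
  exact this.congr_deriv (by ring)

/-- A priori bounds for Riccati solutions with `C ≤ 0`, `c ≥ 0`, `B ∈ [1/2, 1]`. -/
lemma riccati_bounds {A B C T c K : ℝ} (hT : 0 < T) (hC : C ≤ 0) (hc : 0 ≤ c)
    (hB : 1/2 ≤ B) (hB1 : B ≤ 1) (hKc : c ≤ K) (hKA : |A| + 1 ≤ K/2) (hKC : |C| ≤ K)
    {η : ℝ → ℝ} (h : SolvesRiccati A B C T c η) :
    ∀ t ∈ Set.Icc (0:ℝ) T, 0 ≤ η t ∧ η t ≤ K := by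
  have hK0 : 0 ≤ K := le_trans hc hKc
  have hrev := reversed_deriv h
  have hgc : ContinuousOn η (Set.Icc 0 T) := fun s hs => (h.1 s hs).continuousWithinAt
  obtain ⟨M₀, hM₀⟩ := isCompact_Icc.exists_bound_of_continuousOn hgc
  set M₁ : ℝ := max M₀ 0 with hM₁def
  have hM₁ : ∀ t ∈ Set.Icc (0:ℝ) T, |η t| ≤ M₁ := fun t ht =>
    le_trans (hM₀ t ht) (le_max_left _ _)
  have habsA : -|A| ≤ A ∧ A ≤ |A| := ⟨neg_abs_le A, le_abs_self A⟩
  have habsC : -|C| ≤ C := neg_abs_le C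
  -- lower bound
  have hlow : ∀ s ∈ Set.Icc (0:ℝ) T, -η (T - s) ≤ 0 := by
    apply nonpos_of_deriv_le (g' := fun s => A * η (T-s) + B * (η (T-s))^2 + C)
      hT.le (by positivity : (0:ℝ) ≤ |A| + M₁)
    · intro s hs
      simpa using (hrev s hs).fun_neg
    · simp [h.2]; exact hc
    · intro s hs hgs
      have hts : T - s ∈ Set.Icc (0:ℝ) T := ⟨by linarith [hs.2], by linarith [hs.1]⟩
      set y := η (T - s) with hy
      have hy0 : y ≤ 0 := by linarith [hgs]
      have hyM : -y ≤ M₁ := le_trans (neg_le_abs y) (hM₁ _ hts)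
      nlinarith [habsA.1, habsA.2, habsC, sq_nonneg y]
  -- upper bound
  have hup : ∀ s ∈ Set.Icc (0:ℝ) T, η (T - s) - K ≤ 0 := by
    apply nonpos_of_deriv_le (g' := fun s => -(A * η (T-s) + B * (η (T-s))^2 + C))
      hT.le (by positivity : (0:ℝ) ≤ |A| + K)
    · intro s hs
      simpa using (hrev s hs).sub_const K
    · simp [h.2]; linarith
    · intro s hs hgs
      set y := η (T - s) with hy
      have hyK : K ≤ y := by linarith [hgs]
      nlinarith [habsA.1, habsA.2, habsC, mul_nonneg (sub_nonneg.2 hyK) hK0,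
        mul_nonneg (mul_nonneg (by linarith : (0:ℝ) ≤ B) (sub_nonneg.2 hyK)) hK0,
        mul_nonneg (mul_nonneg (by linarith : (0:ℝ) ≤ B) (sub_nonneg.2 hyK))
          (sub_nonneg.2 hyK)]
  intro t ht
  have htT : T - t ∈ Set.Icc (0:ℝ) T := ⟨by linarith [ht.2], by linarith [ht.1]⟩
  have e : T - (T - t) = t := by ring
  constructor
  · have := hlow (T - t) htT; rw [e] at this; linarith
  · have := hup (T - t) htT; rw [e] at this; linarith

/-- Grönwall comparison of two Riccati solutions with nearby coefficients. -/
lemma riccati_dist {A₁ B₁ A₂ B₂ C T c M L ρ : ℝ} (hT : 0 ≤ T)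
    {η₁ η₂ : ℝ → ℝ} (h₁ : SolvesRiccati A₁ B₁ C T c η₁) (h₂ : SolvesRiccati A₂ B₂ C T c η₂)
    (hM₁ : ∀ t ∈ Set.Icc (0:ℝ) T, |η₁ t| ≤ M) (hM₂ : ∀ t ∈ Set.Icc (0:ℝ) T, |η₂ t| ≤ M)
    (hL : |A₁| + 2*|B₁| *M ≤ L) (hρ : |A₁-A₂| *M + |B₁-B₂| *M^2 ≤ ρ) :
    ∀ t ∈ Set.Icc (0:ℝ) T, |η₁ t - η₂ t| ≤ gronwallBound 0 L ρ (T - t) := by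
  have hM0 : 0 ≤ M := le_trans (abs_nonneg _) (hM₁ T ⟨hT, le_refl T⟩)
  set f : ℝ → ℝ := fun s => η₁ (T - s) - η₂ (T - s) with hf
  set F' : ℝ → ℝ := fun s =>
    -(A₁ * η₁ (T-s) + B₁ * (η₁ (T-s))^2 + C) - -(A₂ * η₂ (T-s) + B₂ * (η₂ (T-s))^2 + C)
    with hF'
  have hder : ∀ s ∈ Set.Icc (0:ℝ) T, HasDerivWithinAt f (F' s) (Set.Icc (0:ℝ) T) s :=
    fun s hs => ((reversed_deriv h₁ s hs).sub (reversed_deriv h₂ s hs))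
  have key : ∀ s ∈ Set.Icc (0:ℝ) T, ‖f s‖ ≤ gronwallBound 0 L ρ (s - 0) := by
    apply norm_le_gronwallBound_of_norm_deriv_right_le
      (f' := F') (fun s hs => (hder s hs).continuousWithinAt)
    · intro s hs
      exact deriv_Ici hs (hder s ⟨hs.1, hs.2.le⟩)
    · simp [hf, h₁.2, h₂.2]
    · intro s hs
      have hts : T - s ∈ Set.Icc (0:ℝ) T := ⟨by linarith [hs.2], by linarith [hs.1]⟩
      set x := η₁ (T - s) with hx
      set y := η₂ (T - s) with hyy
      have hxM : |x| ≤ M := hM₁ _ hts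
      have hyM : |y| ≤ M := hM₂ _ hts
      have hF'eq : F' s = (-A₁)*(x-y) + (-B₁)*((x+y)*(x-y)) + (A₂-A₁)*y + (B₂-B₁)*y^2 := by
        rw [hF']; ring
      have step : ‖F' s‖ ≤ |A₁| *|x-y| + |B₁| *(|x|+|y|)*|x-y| + |A₁-A₂| *|y| + |B₁-B₂| *|y|^2 := by
        rw [Real.norm_eq_abs, hF'eq]
        calc |(-A₁)*(x-y) + (-B₁)*((x+y)*(x-y)) + (A₂-A₁)*y + (B₂-B₁)*y^2|
            ≤ |(-A₁)*(x-y) + (-B₁)*((x+y)*(x-y)) + (A₂-A₁)*y| + |(B₂-B₁)*y^2| := abs_add_le _ _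
          _ ≤ |(-A₁)*(x-y) + (-B₁)*((x+y)*(x-y))| + |(A₂-A₁)*y| + |(B₂-B₁)*y^2| := by
              gcongr; exact abs_add_le _ _
          _ ≤ |(-A₁)*(x-y)| + |(-B₁)*((x+y)*(x-y))| + |(A₂-A₁)*y| + |(B₂-B₁)*y^2| := by
              gcongr; exact abs_add_le _ _
          _ ≤ |A₁| *|x-y| + |B₁| *(|x|+|y|)*|x-y| + |A₁-A₂| *|y| + |B₁-B₂| *|y|^2 := by
              have e1 : |(-A₁)*(x-y)| = |A₁| * |x-y| := by rw [abs_mul, abs_neg]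
              have e2 : |(-B₁)*((x+y)*(x-y))| ≤ |B₁| * ((|x|+|y|) * |x-y|) := by
                rw [abs_mul, abs_neg, abs_mul]
                gcongr
                exact abs_add_le _ _
              have e3 : |(A₂-A₁)*y| = |A₁-A₂| * |y| := by
                rw [abs_mul, abs_sub_comm A₂ A₁]
              have e4 : |(B₂-B₁)*y^2| = |B₁-B₂| * |y|^2 := by
                rw [abs_mul, abs_sub_comm B₂ B₁, abs_pow]
              rw [e1, e3, e4]
              nlinarith [e2]
      have hxyM : |x| + |y| ≤ 2*M := by linarith
      have : ‖F' s‖ ≤ (|A₁| + 2*|B₁| *M)*|x-y| + (|A₁-A₂| *M + |B₁-B₂| *M^2) := by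
        refine step.trans ?_
        have h1 : |B₁| *(|x|+|y|)*|x-y| ≤ |B₁| *(2*M)*|x-y| := by gcongr
        have h2 : |A₁-A₂| *|y| ≤ |A₁-A₂| *M := by gcongr
        have h3 : |B₁-B₂| *|y|^2 ≤ |B₁-B₂| *M^2 := by gcongr
        nlinarith [abs_nonneg (x-y)]
      refine this.trans ?_
      have hfxy : ‖f s‖ = |x - y| := by rw [hf, Real.norm_eq_abs]
      rw [hfxy]
      have : (|A₁| + 2*|B₁| *M)*|x-y| ≤ L * |x-y| :=
        mul_le_mul_of_nonneg_right hL (abs_nonneg _)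
      linarith
  intro t ht
  have htT : T - t ∈ Set.Icc (0:ℝ) T := ⟨by linarith [ht.2], by linarith [ht.1]⟩
  have := key (T - t) htT
  have e : T - (T - t) = t := by ring
  rw [hf] at this
  simp only [e, Real.norm_eq_abs, sub_zero] at this
  exact this

lemma gb_le {L ρ x T : ℝ} (hL : 0 < L) (hρ : 0 ≤ ρ) (hx : x ≤ T) :
    gronwallBound 0 L ρ x ≤ ρ / L * (Real.exp (L*T) - 1) := by
  rw [gronwallBound_of_K_ne_0 hL.ne']
  simp only [zero_mul, zero_add]
  have h1 : Real.exp (L*x) ≤ Real.exp (L*T) := Real.exp_le_exp.2 (by nlinarith)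
  have h2 : 0 ≤ ρ / L := div_nonneg hρ hL.le
  nlinarith

/-- Explicit existence for the limiting Riccati equation. -/
lemma riccati_exists (A C T c : ℝ) (hC : C ≤ 0) (hc : 0 ≤ c) :
    ∃ η, SolvesRiccati A 1 C T c η := by
  set D := Real.sqrt (A^2 - 4*C) with hD
  have hdisc : 0 ≤ A^2 - 4*C := by nlinarith [sq_nonneg A]
  have hD2 : D^2 = A^2 - 4*C := Real.sq_sqrt hdisc
  have hD0 : 0 ≤ D := Real.sqrt_nonneg _
  have hDA : |A| ≤ D := by
    rw [← Real.sqrt_sq_eq_abs, hD]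
    exact Real.sqrt_le_sqrt (by nlinarith)
  clear_value D
  set r := (-A + D)/2 with hr
  clear_value r
  have hr0 : 0 ≤ r := by
    have hAD : A ≤ D := le_trans (le_abs_self A) hDA
    rw [hr]; linarith
  have hroot : r^2 + A*r + C = 0 := by
    have h1 : r^2 + A*r + C = (D^2 - (A^2 - 4*C))/4 := by rw [hr]; ring
    rw [hD2] at h1; linarith
  by_cases hDz : D = 0
  · -- degenerate: A = 0, C = 0
    have hA2 : A^2 - 4*C = 0 := by rw [← hD2, hDz]; ring
    have hA : A = 0 := by nlinarith [sq_nonneg A]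
    have hCz : C = 0 := by nlinarith
    refine ⟨fun t => c / (1 + c*(T - t)), ⟨fun t ht => ?_, by simp⟩⟩
    have hw : (0:ℝ) < 1 + c*(T - t) := by nlinarith [ht.2, mul_nonneg hc (sub_nonneg.2 ht.2)]
    have hw' : HasDerivAt (fun t : ℝ => 1 + c*(T - t)) (-c) t := by
      have := (((hasDerivAt_id t).const_sub T).const_mul c).const_add 1
      exact this.congr_deriv (by ring)
    have := (hw'.inv hw.ne').const_mul c
    have heq : c * (-(-c) / (1 + c*(T - t))^2)
        = A * (c / (1 + c*(T-t))) + 1 * (c / (1 + c*(T-t)))^2 + C := by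
      rw [hA, hCz]; field_simp; ring
    rw [heq] at this
    exact (this.congr_deriv rfl).hasDerivWithinAt.congr (fun x _ => by simp [div_eq_mul_inv]) (by simp [div_eq_mul_inv])
  · have hDpos : 0 < D := lt_of_le_of_ne hD0 (Ne.symm hDz)
    by_cases hcr : c = r
    · refine ⟨fun _ => r, ⟨fun t ht => ?_, hcr.symm⟩⟩
      have : A * r + 1 * r^2 + C = 0 := by rw [one_mul]; linarith [hroot]
      exact this ▸ (hasDerivWithinAt_const t _ r)
    · -- generic case
      set k := 1/(c - r) + 1/D with hk
      clear_value k
      set u : ℝ → ℝ := fun t => k * Real.exp (D*(T - t)) - 1/D with hu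
      clear_value u
      have hcr' : c - r ≠ 0 := sub_ne_zero.2 hcr
      have hune : ∀ t ∈ Set.Icc (0:ℝ) T, u t ≠ 0 := by
        intro t ht
        have hexp : 1 ≤ Real.exp (D*(T - t)) :=
          Real.one_le_exp (mul_nonneg hD0 (sub_nonneg.2 ht.2))
        rcases lt_or_gt_of_ne hcr with hlt | hgt
        · -- c < r : k ≤ 0, u t ≤ 1/(c-r) < 0
          have hrc : 0 < r - c := by linarith
          have hrcD : r - c ≤ D := by
            have : -A - D ≤ 0 := by linarith [le_trans (neg_le_abs A) hDA]
            rw [hr]; linarith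
          have hk0 : k ≤ 0 := by
            rw [hk]
            have h1 : 1/D ≤ 1/(r - c) := one_div_le_one_div_of_le hrc hrcD
            have h2 : 1/(c - r) = -(1/(r - c)) := by field_simp; ring
            rw [h2]; linarith
          have hut : u t = k * Real.exp (D*(T - t)) - 1/D := by rw [hu]
          have : u t ≤ 1/(c - r) := by
            have h5 : k * Real.exp (D*(T - t)) ≤ k * 1 :=
              mul_le_mul_of_nonpos_left hexp hk0
            rw [mul_one] at h5
            have hk' : k - 1/D = 1/(c - r) := by rw [hk]; ring
            rw [hut]; linarith
          have hneg : 1/(c - r) < 0 := by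
            apply div_neg_of_pos_of_neg one_pos; linarith
          exact ne_of_lt (lt_of_le_of_lt this hneg)
        · -- r < c : u t ≥ 1/(c-r) > 0
          have hpos : 0 < 1/(c - r) := by apply div_pos one_pos; linarith
          have hkpos : 0 < k := by
            have h2 : 0 < 1/D := by positivity
            rw [hk]; linarith
          have hut : u t = k * Real.exp (D*(T - t)) - 1/D := by rw [hu]
          have : 1/(c - r) ≤ u t := by
            have h5 : k * 1 ≤ k * Real.exp (D*(T - t)) :=
              mul_le_mul_of_nonneg_left hexp hkpos.le
            rw [mul_one] at h5
            have hk' : k - 1/D = 1/(c - r) := by rw [hk]; ring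
            rw [hut]; linarith
          exact ne_of_gt (lt_of_lt_of_le hpos this)
      refine ⟨fun t => r + (u t)⁻¹, ⟨fun t ht => ?_, ?_⟩⟩
      · have hne := hune t ht
        have hu' : HasDerivAt u (-D * u t - 1) t := by
          have hlin : HasDerivAt (fun t : ℝ => D*(T - t)) (-D) t := by
            have := ((hasDerivAt_id t).const_sub T).const_mul D
            exact this.congr_deriv (by ring)
          have hexp' : HasDerivAt (fun t => Real.exp (D*(T - t)))
              (Real.exp (D*(T - t)) * (-D)) t := hlin.exp
          have h6 := (hexp'.const_mul k).sub_const (1/D)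
          have hut : u t = k * Real.exp (D*(T - t)) - 1/D := by rw [hu]
          have h7 : HasDerivAt u (k * (Real.exp (D*(T - t)) * -D)) t := by rw [hu]; exact h6
          refine h7.congr_deriv ?_
          rw [hut]
          field_simp
          ring
        have hinv := (hu'.inv hne).const_add r
        have h2r : A + 2*r = D := by rw [hr]; ring
        have heq : -(-D * u t - 1) / (u t)^2
            = A * (r + (u t)⁻¹) + 1 * (r + (u t)⁻¹)^2 + C := by
          have hv : u t * (u t)⁻¹ = 1 := mul_inv_cancel₀ hne
          linear_combination (D * (u t)⁻¹) * hv - (u t)⁻¹ * h2r - hroot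
        rw [heq] at hinv
        exact hinv.hasDerivWithinAt
      · have huT : u T = 1/(c - r) := by
          rw [hu]; simp only [sub_self, mul_zero, Real.exp_zero, mul_one]
          rw [hk]; ring
        show r + (u T)⁻¹ = c
        rw [huT, one_div, inv_inv]
        ring

end RiccatiAux

open RiccatiAux in
/-- As `N → ∞`, the open-loop and closed-loop Riccati solutions of the
Carmona–Fouque–Sun systemic-risk model both converge, uniformly on `[0,T]`,
to the unique solution of the limiting (mean field game) Riccati equation
`η'(t) = 2(a + q)·η(t) + η(t)² + q² − ε`, `η(T) = c`; in particular the two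
finite-player solutions become uniformly close to each other. -/
theorem riccati_open_and_closed_loop_converge_to_mfg
    (T : ℝ) (hT : 0 < T) (a q ε c : ℝ)
    (hq : 0 ≤ q) (hε : q ^ 2 ≤ ε) (hc : 0 ≤ c)
    (ηOL ηCL : ℕ → ℝ → ℝ)
    (hOL : ∀ N : ℕ, 1 ≤ N →
      SolvesRiccati (2 * (a + q - q / (N : ℝ))) (1 - 1 / (N : ℝ)) (q ^ 2 - ε) T c (ηOL N))
    (hCL : ∀ N : ℕ, 1 ≤ N →
      SolvesRiccati (2 * (a + q)) (1 - 1 / (N : ℝ) ^ 2) (q ^ 2 - ε) T c (ηCL N)) :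
    ∃ ηlim : ℝ → ℝ,
      SolvesRiccati (2 * (a + q)) 1 (q ^ 2 - ε) T c ηlim ∧
      (∀ η' : ℝ → ℝ, SolvesRiccati (2 * (a + q)) 1 (q ^ 2 - ε) T c η' →
        ∀ t ∈ Set.Icc (0 : ℝ) T, η' t = ηlim t) ∧
      (∀ δ : ℝ, 0 < δ → ∃ N₀ : ℕ, ∀ N : ℕ, N₀ ≤ N →
        ∀ t ∈ Set.Icc (0 : ℝ) T, |ηOL N t - ηlim t| < δ) ∧
      (∀ δ : ℝ, 0 < δ → ∃ N₀ : ℕ, ∀ N : ℕ, N₀ ≤ N →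
        ∀ t ∈ Set.Icc (0 : ℝ) T, |ηCL N t - ηlim t| < δ) ∧
      (∀ δ : ℝ, 0 < δ → ∃ N₀ : ℕ, ∀ N : ℕ, N₀ ≤ N →
        ∀ t ∈ Set.Icc (0 : ℝ) T, |ηOL N t - ηCL N t| < δ) := by
  set A : ℝ := 2 * (a + q) with hA
  set C : ℝ := q^2 - ε with hCdef
  have hC : C ≤ 0 := by rw [hCdef]; linarith
  clear_value A C
  obtain ⟨ηl, hηl⟩ := riccati_exists A C T c hC hc
  set K : ℝ := 2*|A| + 4*q + |C| + c + 2 with hK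
  have habsA : 0 ≤ |A| := abs_nonneg A
  have habsC : 0 ≤ |C| := abs_nonneg C
  have hKc : c ≤ K := by rw [hK]; linarith
  have hKC : |C| ≤ K := by rw [hK]; linarith
  have hKA : |A| + 1 ≤ K/2 := by rw [hK]; linarith
  have hK0 : 0 ≤ K := le_trans hc hKc
  clear_value K
  -- bounds for the limit solution
  have hbl : ∀ t ∈ Set.Icc (0:ℝ) T, 0 ≤ ηl t ∧ ηl t ≤ K :=
    riccati_bounds hT hC hc (by norm_num) (le_refl 1) hKc hKA hKC hηl
  have hblabs : ∀ t ∈ Set.Icc (0:ℝ) T, |ηl t| ≤ K := fun t ht =>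
    abs_le.2 ⟨by linarith [(hbl t ht).1], (hbl t ht).2⟩
  -- coefficient facts for N ≥ 2
  have hNfacts : ∀ N : ℕ, 2 ≤ N → (1:ℝ)/(N:ℝ) ≤ 1/2 ∧ (0:ℝ) < (N:ℝ) := by
    intro N hN
    have h2 : (2:ℝ) ≤ (N:ℝ) := by exact_mod_cast hN
    constructor
    · apply one_div_le_one_div_of_le <;> linarith
    · linarith
  -- bounds for ηOL N, N ≥ 2
  have hbOL : ∀ N : ℕ, 2 ≤ N → ∀ t ∈ Set.Icc (0:ℝ) T, |ηOL N t| ≤ K := by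
    intro N hN
    obtain ⟨hN2, hNpos⟩ := hNfacts N hN
    have hqN : 0 ≤ q/(N:ℝ) := div_nonneg hq hNpos.le
    have hqN' : q/(N:ℝ) ≤ q := div_le_self hq (by exact_mod_cast hN.trans' (by norm_num) : (1:ℝ) ≤ (N:ℝ))
    have hAN : |2 * (a + q - q/(N:ℝ))| ≤ |A| + 2*q := by
      have : 2 * (a + q - q/(N:ℝ)) = A - 2*(q/(N:ℝ)) := by rw [hA]; ring
      rw [this]
      calc |A - 2*(q/(N:ℝ))| ≤ |A| + |2*(q/(N:ℝ))| := abs_sub _ _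
        _ ≤ |A| + 2*q := by
            rw [abs_of_nonneg (by linarith : (0:ℝ) ≤ 2*(q/(N:ℝ)))]
            linarith
    have h1N : (0:ℝ) ≤ 1/(N:ℝ) := by positivity
    have hb := riccati_bounds (B := 1 - 1/(N:ℝ)) hT hC hc
      (by linarith) (by linarith) hKc
      (by rw [hK]; linarith [hAN]) hKC (hOL N (le_trans (by norm_num) hN))
    intro t ht
    exact abs_le.2 ⟨by linarith [(hb t ht).1], (hb t ht).2⟩
  -- bounds for ηCL N, N ≥ 2
  have hbCL : ∀ N : ℕ, 2 ≤ N → ∀ t ∈ Set.Icc (0:ℝ) T, |ηCL N t| ≤ K := by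
    intro N hN
    obtain ⟨hN2, hNpos⟩ := hNfacts N hN
    have h1N : (0:ℝ) ≤ 1/(N:ℝ)^2 := by positivity
    have h1N' : 1/(N:ℝ)^2 ≤ 1/2 := by
      have h2 : (2:ℝ) ≤ (N:ℝ) := by exact_mod_cast hN
      have : (2:ℝ) ≤ (N:ℝ)^2 := by nlinarith
      apply one_div_le_one_div_of_le <;> linarith
    have hb := riccati_bounds (B := 1 - 1/(N:ℝ)^2) hT hC hc
      (by linarith) (by linarith) hKc
      (by rw [hK]; linarith) hKC (hCL N (le_trans (by norm_num) hN))
    intro t ht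
    exact abs_le.2 ⟨by linarith [(hb t ht).1], (hb t ht).2⟩
  set L : ℝ := |A| + 2*K + 1 with hL
  have hLpos : 0 < L := by rw [hL]; linarith
  have hLge : |A| + 2*|(1:ℝ)| *K ≤ L := by rw [hL, abs_one]; linarith
  clear_value L
  -- convergence rate constant
  set κ : ℝ := (2*q*K + K^2 + 1)/L * (Real.exp (L*T) - 1) with hκ
  have hexpT : 0 ≤ Real.exp (L*T) - 1 := by
    have : (1:ℝ) ≤ Real.exp (L*T) := Real.one_le_exp (by positivity)
    linarith
  have hκ0 : 0 ≤ κ := by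
    rw [hκ]; apply mul_nonneg (div_nonneg (by positivity) hLpos.le) hexpT
  clear_value κ
  -- key distance estimates
  have distOL : ∀ N : ℕ, 2 ≤ N → ∀ t ∈ Set.Icc (0:ℝ) T, |ηOL N t - ηl t| ≤ κ/(N:ℝ) := by
    intro N hN t ht
    obtain ⟨hN2, hNpos⟩ := hNfacts N hN
    have hρ : |A - 2*(a + q - q/(N:ℝ))| *K + |(1:ℝ) - (1 - 1/(N:ℝ))| *K^2
        ≤ (2*q*K + K^2 + 1)/(N:ℝ) := by
      have e1 : A - 2*(a + q - q/(N:ℝ)) = 2*q/(N:ℝ) := by rw [hA]; ring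
      have e2 : (1:ℝ) - (1 - 1/(N:ℝ)) = 1/(N:ℝ) := by ring
      rw [e1, e2, abs_of_nonneg (div_nonneg (by linarith : (0:ℝ) ≤ 2*q) hNpos.le),
        abs_of_nonneg (by positivity : (0:ℝ) ≤ 1/(N:ℝ))]
      have e3 : 2*q/(N:ℝ)*K + 1/(N:ℝ)*K^2 = (2*q*K + K^2)/(N:ℝ) := by
        field_simp
      rw [e3, div_le_div_iff₀ hNpos hNpos]
      nlinarith [hNpos.le]
    have hd := riccati_dist (L := L) (ρ := (2*q*K + K^2 + 1)/(N:ℝ)) hT.le hηl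
      (hOL N (le_trans (by norm_num) hN)) hblabs (hbOL N hN) hLge hρ t ht
    have hgb := gb_le (L := L) (ρ := (2*q*K + K^2 + 1)/(N:ℝ)) (x := T - t) (T := T)
      hLpos (by positivity) (by linarith [ht.1])
    have : |ηl t - ηOL N t| ≤ (2*q*K + K^2 + 1)/(N:ℝ)/L * (Real.exp (L*T) - 1) :=
      le_trans hd hgb
    rw [abs_sub_comm]
    refine this.trans (le_of_eq ?_)
    rw [hκ]; ring
  have distCL : ∀ N : ℕ, 2 ≤ N → ∀ t ∈ Set.Icc (0:ℝ) T, |ηCL N t - ηl t| ≤ κ/(N:ℝ) := by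
    intro N hN t ht
    obtain ⟨hN2, hNpos⟩ := hNfacts N hN
    have hρ : |A - A| *K + |(1:ℝ) - (1 - 1/(N:ℝ)^2)| *K^2
        ≤ (2*q*K + K^2 + 1)/(N:ℝ) := by
      have e2 : (1:ℝ) - (1 - 1/(N:ℝ)^2) = 1/(N:ℝ)^2 := by ring
      rw [sub_self, abs_zero, zero_mul, zero_add, e2,
        abs_of_nonneg (by positivity : (0:ℝ) ≤ 1/(N:ℝ)^2)]
      have e3 : 1/(N:ℝ)^2*K^2 = K^2/(N:ℝ)^2 := by ring
      rw [e3, div_le_div_iff₀ (by positivity) hNpos]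
      have hqK : 0 ≤ 2*q*K := by positivity
      have hNge : (2:ℝ) ≤ (N:ℝ) := by exact_mod_cast hN
      have hNN : (N:ℝ) ≤ (N:ℝ)^2 := by nlinarith
      nlinarith [sq_nonneg K, mul_nonneg hqK (by positivity : (0:ℝ) ≤ (N:ℝ)^2),
        mul_le_mul_of_nonneg_left hNN (sq_nonneg K)]
    have hd := riccati_dist (L := L) (ρ := (2*q*K + K^2 + 1)/(N:ℝ)) hT.le hηl
      (hCL N (le_trans (by norm_num) hN)) hblabs (hbCL N hN) hLge hρ t ht
    have hgb := gb_le (L := L) (ρ := (2*q*K + K^2 + 1)/(N:ℝ)) (x := T - t) (T := T)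
      hLpos (by positivity) (by linarith [ht.1])
    have : |ηl t - ηCL N t| ≤ (2*q*K + K^2 + 1)/(N:ℝ)/L * (Real.exp (L*T) - 1) :=
      le_trans hd hgb
    rw [abs_sub_comm]
    refine this.trans (le_of_eq ?_)
    rw [hκ]; ring
  -- choice of N₀ for a given δ
  have hN₀ : ∀ δ : ℝ, 0 < δ → ∃ N₀ : ℕ, 2 ≤ N₀ ∧ ∀ N : ℕ, N₀ ≤ N → κ/(N:ℝ) < δ := by
    intro δ hδ
    obtain ⟨N₁, hN₁⟩ := exists_nat_gt (κ/δ)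
    refine ⟨max N₁ 2, le_max_right _ _, fun N hN => ?_⟩
    have hN1 : (N₁:ℝ) ≤ (N:ℝ) := by
      exact_mod_cast le_trans (le_max_left N₁ 2) hN
    have hN2 : (2:ℕ) ≤ N := le_trans (le_max_right _ _) hN
    have hNpos : (0:ℝ) < (N:ℝ) := by exact_mod_cast lt_of_lt_of_le (by norm_num) hN2
    have hκN : κ/δ < (N:ℝ) := lt_of_lt_of_le hN₁ hN1
    rw [div_lt_iff₀ hNpos]
    rw [div_lt_iff₀ hδ] at hκN
    linarith
  refine ⟨ηl, hηl, ?_, ?_, ?_, ?_⟩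
  · -- uniqueness
    intro η' hη' t ht
    have hb' : ∀ s ∈ Set.Icc (0:ℝ) T, 0 ≤ η' s ∧ η' s ≤ K :=
      riccati_bounds hT hC hc (by norm_num) (le_refl 1) hKc hKA hKC hη'
    have hb'abs : ∀ s ∈ Set.Icc (0:ℝ) T, |η' s| ≤ K := fun s hs =>
      abs_le.2 ⟨by linarith [(hb' s hs).1], (hb' s hs).2⟩
    have hd := riccati_dist (L := L) (ρ := 0) hT.le hη' hηl hb'abs hblabs hLge
      (by simp) t ht
    rw [gronwallBound_ε0_δ0] at hd
    have := abs_nonneg (η' t - ηl t)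
    have h0 : η' t - ηl t = 0 := abs_eq_zero.1 (le_antisymm hd this)
    linarith
  · -- OL convergence
    intro δ hδ
    obtain ⟨N₀, hN₀2, hN₀'⟩ := hN₀ δ hδ
    refine ⟨N₀, fun N hN t ht => ?_⟩
    exact lt_of_le_of_lt (distOL N (le_trans hN₀2 hN) t ht) (hN₀' N hN)
  · -- CL convergence
    intro δ hδ
    obtain ⟨N₀, hN₀2, hN₀'⟩ := hN₀ δ hδ
    refine ⟨N₀, fun N hN t ht => ?_⟩
    exact lt_of_le_of_lt (distCL N (le_trans hN₀2 hN) t ht) (hN₀' N hN)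
  · -- OL vs CL
    intro δ hδ
    obtain ⟨N₀, hN₀2, hN₀'⟩ := hN₀ (δ/2) (by linarith)
    refine ⟨N₀, fun N hN t ht => ?_⟩
    have h1 := lt_of_le_of_lt (distOL N (le_trans hN₀2 hN) t ht) (hN₀' N hN)
    have h2 := lt_of_le_of_lt (distCL N (le_trans hN₀2 hN) t ht) (hN₀' N hN)
    calc |ηOL N t - ηCL N t| ≤ |ηOL N t - ηl t| + |ηl t - ηCL N t| := abs_sub_le _ _ _
      _ < δ/2 + δ/2 := by rw [abs_sub_comm (ηl t)]; linarith
      _ = δ := by ring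
end

section
/- Let T > 0, let N ≥ 2 be an integer, and let a ∈ ℝ, q > 0, ε ≥ q², and c > 0. Let η^{OL,N} be the unique solution on [0,T] of η'(t) = 2(a + q − q/N)η(t) + (1 − 1/N)η(t)² + q² − ε with η(T) = c, and let η^{CL,N} be the unique solution of η'(t) = 2(a + q)η(t) + (1 − 1/N²)η(t)² + q² − ε with η(T) = c. Then η^{OL,N} ≠ η^{CL,N}: there exists t ∈ [0,T) with η^{OL,N}(t) ≠ η^{CL,N}(t). -/
/-- For any finite number `N ≥ 2` of banks (with `q > 0`, `ε ≥ q²`, `c > 0`),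
the open-loop and closed-loop Riccati solutions of the Carmona–Fouque–Sun
systemic-risk model are distinct functions on `[0,T)`. -/
theorem openLoop_ne_closedLoop_riccati
    (T : ℝ) (hT : 0 < T) (N : ℕ) (hN : 2 ≤ N) (a q ε c : ℝ)
    (hq : 0 < q) (hε : q ^ 2 ≤ ε) (hc : 0 < c)
    (ηOL ηCL : ℝ → ℝ)
    (hOL : SolvesRiccati (2 * (a + q - q / (N : ℝ))) (1 - 1 / (N : ℝ)) (q ^ 2 - ε) T c ηOL)
    (hCL : SolvesRiccati (2 * (a + q)) (1 - 1 / (N : ℝ) ^ 2) (q ^ 2 - ε) T c ηCL) :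
    ∃ t ∈ Set.Ico (0 : ℝ) T, ηOL t ≠ ηCL t := by
  by_contra h
  push_neg at h
  -- the two functions agree on all of [0,T]
  have heq : ∀ t ∈ Set.Icc (0 : ℝ) T, ηCL t = ηOL t := by
    intro t ht
    rcases eq_or_lt_of_le ht.2 with h' | h'
    · rw [h', hOL.2, hCL.2]
    · exact (h t ⟨ht.1, h'⟩).symm
  have hTmem : T ∈ Set.Icc (0 : ℝ) T := ⟨le_of_lt hT, le_refl T⟩
  -- derivative uniqueness at T
  have hd1 := hOL.1 T hTmem
  have hd2 := hCL.1 T hTmem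
  have hd1' : HasDerivWithinAt ηCL
      (2 * (a + q - q / (N : ℝ)) * ηOL T + (1 - 1 / (N : ℝ)) * (ηOL T) ^ 2 + (q ^ 2 - ε))
      (Set.Icc (0 : ℝ) T) T :=
    hd1.congr heq (heq T hTmem)
  have hu : UniqueDiffWithinAt ℝ (Set.Icc (0 : ℝ) T) T :=
    (uniqueDiffOn_Icc hT) T hTmem
  have key : 2 * (a + q - q / (N : ℝ)) * ηOL T + (1 - 1 / (N : ℝ)) * (ηOL T) ^ 2 + (q ^ 2 - ε)
      = 2 * (a + q) * ηCL T + (1 - 1 / (N : ℝ) ^ 2) * (ηCL T) ^ 2 + (q ^ 2 - ε) := by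
    rw [← hd1'.derivWithin hu, ← hd2.derivWithin hu]
  rw [hOL.2, hCL.2] at key
  have hn : (2 : ℝ) ≤ (N : ℝ) := by exact_mod_cast hN
  have hn0 : (0 : ℝ) < (N : ℝ) := by linarith
  have key2 : -2 * q * c * (N : ℝ) = c ^ 2 * ((N : ℝ) - 1) := by
    field_simp at key
    nlinarith [key, sq_nonneg ((N:ℝ))]
  nlinarith [mul_pos (mul_pos hq hc) hn0, mul_pos (mul_pos hc hc) (by linarith : (0:ℝ) < (N:ℝ) - 1)]
end
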